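/- arXiv:2410.04674 — 2 statements merged into one kernel-verified Lean document; each statement's English description precedes it below -/
import Mathlib

section
/- A quasi-metric space (X,d) has the property that every bounded ideal of (X,d) has a colimit if and only if (X,d) is local Yoneda complete, i.e., (i) whenever (x,r) is a least upper bound in BX of a directed set {(x_i,r_i)}_{i∈D} of formal balls, then r = inf_{i∈D} r_i, and (ii) BX is a local dcpo. -/
open scoped ENNReal NNReal

universe u v w

/-- A quasi-metric space structure on `X`: distances valued in `[0,∞]`, with
`d x x = 0`, the triangle inequality, and separatedness. -/
structure QuasiMetric (X : Type u) where
  d : X → X → ℝ≥0∞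
  d_self : ∀ x, d x x = 0
  d_triangle : ∀ x y z, d x z ≤ d x y + d y z
  d_separated : ∀ x y, d x y = 0 → d y x = 0 → x = y

namespace QuasiMetric

variable {X : Type u}

/-- The order on formal balls: `(x, r) ⊑ (y, s)` iff `s + d x y ≤ r`
(equivalently `d x y ≤ r - s`). -/
def ballLE (q : QuasiMetric X) (p p' : X × ℝ≥0) : Prop :=
  (p'.2 : ℝ≥0∞) + q.d p.1 p'.1 ≤ (p.2 : ℝ≥0∞)

/-- `b` is a least upper bound of the set `S` of formal balls. -/
def IsBallLUB (q : QuasiMetric X) (S : Set (X × ℝ≥0)) (b : X × ℝ≥0) : Prop :=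
  (∀ p ∈ S, q.ballLE p b) ∧ ∀ c, (∀ p ∈ S, q.ballLE p c) → q.ballLE b c

/-- `le` is a directed preorder (reflexive, transitive, directed). -/
def DirectedPre {D : Type v} (le : D → D → Prop) : Prop :=
  (∀ i, le i i) ∧ (∀ i j k, le i j → le j k → le i k) ∧ ∀ i j, ∃ k, le i k ∧ le j k

/-- A net `x : D → X` is forward Cauchy: `inf_i sup_{k ≥ j ≥ i} d (x j) (x k) = 0`. -/
def ForwardCauchy (q : QuasiMetric X) {D : Type v} (le : D → D → Prop) (x : D → X) : Prop :=
  (⨅ i, ⨆ j, ⨆ (_ : le i j), ⨆ k, ⨆ (_ : le j k), q.d (x j) (x k)) = 0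

/-- `a` is a Yoneda limit of the net `x : D → X`:
for all `y`, `d a y = inf_i sup_{j ≥ i} d (x j) y`. -/
def IsYonedaLimit (q : QuasiMetric X) {D : Type v} (le : D → D → Prop) (x : D → X) (a : X) :
    Prop :=
  ∀ y, q.d a y = ⨅ i, ⨆ j, ⨆ (_ : le i j), q.d (x j) y

/-- `(X, d)` is Yoneda complete: every forward Cauchy net has a Yoneda limit. -/
def YonedaComplete (q : QuasiMetric X) : Prop :=
  ∀ (D : Type u) (le : D → D → Prop), DirectedPre le → Nonempty D →
    ∀ x : D → X, q.ForwardCauchy le x → ∃ a, q.IsYonedaLimit le x a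

/-- `(X, d)` is standard: whenever a directed set of formal balls (viewed as a monotone
net indexed by itself) has a least upper bound, the corresponding forward Cauchy net of
centers has a Yoneda limit. -/
def Standard (q : QuasiMetric X) : Prop :=
  ∀ S : Set (X × ℝ≥0), S.Nonempty → DirectedOn q.ballLE S →
    (∃ b, q.IsBallLUB S b) →
    ∃ a, q.IsYonedaLimit (fun p p' : ↥S => q.ballLE p.1 p'.1) (fun p : ↥S => p.1.1) a

/-- A weight of `(X, d)`: `φ x ≤ φ y + d x y`. -/
def IsWeight (q : QuasiMetric X) (φ : X → ℝ≥0∞) : Prop :=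
  ∀ x y, φ x ≤ φ y + q.d x y

/-- The quasi-metric on weights: `ρ(φ, ψ) = sup_y (ψ y ⊖ φ y)`. -/
noncomputable def rho {Y : Type v} (φ ψ : Y → ℝ≥0∞) : ℝ≥0∞ := ⨆ y, ψ y - φ y

/-- An ideal of `(X, d)`: a weight `φ` with `inf φ = 0` such that
`ρ(φ, min (λ, μ)) = min (ρ(φ,λ), ρ(φ,μ))` for all weights `λ`, `μ`. -/
def IsIdeal (q : QuasiMetric X) (φ : X → ℝ≥0∞) : Prop :=
  q.IsWeight φ ∧ (⨅ x, φ x) = 0 ∧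
    ∀ l m : X → ℝ≥0∞, q.IsWeight l → q.IsWeight m →
      rho φ (fun x => min (l x) (m x)) = min (rho φ l) (rho φ m)

/-- A weight `φ` is bounded: there are `r < ∞` and `a ∈ X` with `d x a ≤ r + φ x` for all `x`. -/
def BoundedWeight (q : QuasiMetric X) (φ : X → ℝ≥0∞) : Prop :=
  ∃ (r : ℝ≥0) (a : X), ∀ x, q.d x a ≤ (r : ℝ≥0∞) + φ x

/-- `b` is a colimit of the weight `φ`: for all `y`, `d b y = sup_x (d x y ⊖ φ x)`. -/
def IsColimit (q : QuasiMetric X) (φ : X → ℝ≥0∞) (b : X) : Prop :=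
  ∀ y, q.d b y = ⨆ x, q.d x y - φ x

/-- The poset of formal balls is a dcpo: every (nonempty) directed subset has a lub. -/
def BallDcpo (q : QuasiMetric X) : Prop :=
  ∀ S : Set (X × ℝ≥0), S.Nonempty → DirectedOn q.ballLE S → ∃ b, q.IsBallLUB S b

/-- The poset of formal balls is a local dcpo: every (nonempty) directed subset with an
upper bound has a lub. -/
def BallLocalDcpo (q : QuasiMetric X) : Prop :=
  ∀ S : Set (X × ℝ≥0), S.Nonempty → DirectedOn q.ballLE S →
    (∃ c, ∀ p ∈ S, q.ballLE p c) → ∃ b, q.IsBallLUB S b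

/-- `u` is way below `v` in the poset of formal balls. -/
def ballWayBelow (q : QuasiMetric X) (u v : X × ℝ≥0) : Prop :=
  ∀ S : Set (X × ℝ≥0), S.Nonempty → DirectedOn q.ballLE S →
    ∀ s, q.IsBallLUB S s → q.ballLE v s → ∃ p ∈ S, q.ballLE u p

/-- The poset of formal balls is a continuous poset: for every `p`, the set of elements
way below `p` is (nonempty) directed and has `p` as its least upper bound. -/
def BallContinuousPoset (q : QuasiMetric X) : Prop :=
  ∀ p : X × ℝ≥0,
    {u : X × ℝ≥0 | q.ballWayBelow u p}.Nonempty ∧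
    DirectedOn q.ballLE {u : X × ℝ≥0 | q.ballWayBelow u p} ∧
    q.IsBallLUB {u : X × ℝ≥0 | q.ballWayBelow u p} p

/-- A function `χ` is `𝓙`-closed: `ρ(ψ, χ) ≥ χ (colim ψ)` for every bounded ideal `ψ`
possessing a colimit. -/
def JClosed (q : QuasiMetric X) (χ : X → ℝ≥0∞) : Prop :=
  ∀ ψ : X → ℝ≥0∞, q.IsIdeal ψ → q.BoundedWeight ψ → ∀ c, q.IsColimit ψ c → χ c ≤ rho ψ χ

/-- `(X, d)` is a continuous `𝕁`-algebra: every bounded ideal has a colimit, and there is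
a map `⇓` assigning to each `x` a bounded ideal `⇓x` with `ρ(⇓x, φ) = d x (colim φ)` for
all `x` and all bounded ideals `φ`. -/
def ContinuousJAlgebra (q : QuasiMetric X) : Prop :=
  ∃ colim : (X → ℝ≥0∞) → X,
    (∀ φ, q.IsIdeal φ → q.BoundedWeight φ → q.IsColimit φ (colim φ)) ∧
    ∃ w : X → X → ℝ≥0∞,
      (∀ x, q.IsIdeal (w x) ∧ q.BoundedWeight (w x)) ∧
      ∀ (x : X) (φ : X → ℝ≥0∞), q.IsIdeal φ → q.BoundedWeight φ →
        rho (w x) φ = q.d x (colim φ)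

/-- The quasi-metric space of all functions `X → [0,∞]` satisfying a predicate `P`
(e.g. the bounded weights, or the bounded ideals), with the quasi-metric
`ρ(φ, ψ) = sup_x (ψ x ⊖ φ x)`. -/
noncomputable def weightSpace (q : QuasiMetric X) (P : (X → ℝ≥0∞) → Prop) :
    QuasiMetric {φ : X → ℝ≥0∞ // P φ} where
  d φ ψ := rho φ.1 ψ.1
  d_self φ := by simp [rho]
  d_triangle φ ψ χ := by
    refine iSup_le fun x => ?_
    calc χ.1 x - φ.1 x ≤ (χ.1 x - ψ.1 x) + (ψ.1 x - φ.1 x) := tsub_le_tsub_add_tsub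
    _ ≤ rho ψ.1 χ.1 + rho φ.1 ψ.1 :=
        add_le_add (le_iSup (fun y => χ.1 y - ψ.1 y) x) (le_iSup (fun y => ψ.1 y - φ.1 y) x)
    _ = rho φ.1 ψ.1 + rho ψ.1 χ.1 := add_comm _ _
  d_separated φ ψ h1 h2 := by
    apply Subtype.ext
    funext x
    have hx1 : ψ.1 x - φ.1 x ≤ 0 := by
      rw [← h1]; exact le_iSup (fun y => ψ.1 y - φ.1 y) x
    have hx2 : φ.1 x - ψ.1 x ≤ 0 := by
      rw [← h2]; exact le_iSup (fun y => φ.1 y - ψ.1 y) x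
    exact le_antisymm (tsub_eq_zero_iff_le.mp (le_antisymm hx2 (zero_le)))
      (tsub_eq_zero_iff_le.mp (le_antisymm hx1 (zero_le)))

end QuasiMetric

private lemma esub_sub' (a b c : ℝ≥0∞) (h : c ≤ b) (hc : c ≠ ∞) : a - (b - c) = a + c - b := by
  conv_rhs => rw [← tsub_add_cancel_of_le h, add_comm (b-c) c,
    tsub_add_eq_tsub_tsub (a+c) c (b-c), ENNReal.add_sub_cancel_right hc]

private lemma esub_add' (a b c : ℝ≥0∞) (h : b ≤ a) (hb : b ≠ ∞) : a - b + c = a + c - b := by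
  conv_rhs => rw [← tsub_add_cancel_of_le h]
  rw [add_comm (a-b) b, add_assoc, ENNReal.add_sub_cancel_left hb]

private lemma eadd_sub_add' (a b e : ℝ≥0∞) : (a + e) - (b + e) ≤ a - b := by
  rw [tsub_le_iff_right]
  calc a + e ≤ (a - b + b) + e := by gcongr; exact le_tsub_add
  _ = a - b + (b + e) := by ring

private lemma esub_sub_le' (a b e : ℝ≥0∞) : a - (b - e) ≤ (a - b) + e := by
  rw [tsub_le_iff_right]
  calc a ≤ a - b + b := le_tsub_add
  _ ≤ a - b + ((b - e) + e) := by gcongr; exact le_tsub_add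
  _ = a - b + e + (b - e) := by ring

private lemma emin_add' (a b c : ℝ≥0∞) : min a b + c = min (a+c) (b+c) := by
  rcases le_total a b with h|h <;> simp [min_eq_left, min_eq_right, h, add_le_add_left h c]

private lemma emin_sub' (a b c : ℝ≥0∞) : min a b - c = min (a-c) (b-c) := by
  rcases le_total a b with h|h <;> simp [min_eq_left, min_eq_right, h, tsub_le_tsub_right h c]

private lemma ecancel' {a x y : ℝ≥0∞} (ha : a ≠ ∞) (h : a + x ≤ a + y) : x ≤ y :=
  (WithTop.add_le_add_iff_left ha).mp h

open QuasiMetric in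
private lemma exists_ball_lub' {X : Type u} (q : QuasiMetric X)
    (hcolim : ∀ φ : X → ℝ≥0∞, q.IsIdeal φ → q.BoundedWeight φ → ∃ b, q.IsColimit φ b)
    (S : Set (X × ℝ≥0)) (hne : S.Nonempty) (hdir : DirectedOn q.ballLE S)
    (e : X × ℝ≥0) (hub : ∀ p ∈ S, q.ballLE p e) :
    ∃ b, q.IsBallLUB S (b, ⨅ p : ↥S, (p : X × ℝ≥0).2) := by
  haveI hSne : Nonempty ↥S := hne.to_subtype
  set rinf : ℝ≥0 := ⨅ p : ↥S, (p : X × ℝ≥0).2 with hrinf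
  set φ : X → ℝ≥0∞ :=
    fun y => ⨅ p : ↥S, (q.d y (p : X × ℝ≥0).1 + ((p : X × ℝ≥0).2 : ℝ≥0∞)) with hφdef
  have hrle : ∀ y, (rinf : ℝ≥0∞) ≤ φ y := fun y => le_iInf fun p => by
    calc (rinf : ℝ≥0∞) ≤ ((p : X × ℝ≥0).2 : ℝ≥0∞) := by
          exact_mod_cast ciInf_le (OrderBot.bddBelow _) p
    _ ≤ _ := le_add_self
  set ψ : X → ℝ≥0∞ := fun y => φ y - rinf with hψdef
  have hφψ : ∀ y, (rinf : ℝ≥0∞) + ψ y = φ y := fun y => add_tsub_cancel_of_le (hrle y)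
  have hφw : ∀ x y, φ x ≤ q.d x y + φ y := by
    intro x y
    rw [hφdef, ENNReal.add_iInf]
    refine le_iInf fun p => ?_
    calc φ x ≤ q.d x (p : X × ℝ≥0).1 + (p : X × ℝ≥0).2 := iInf_le _ p
    _ ≤ (q.d x y + q.d y (p : X × ℝ≥0).1) + (p : X × ℝ≥0).2 := by
        gcongr; exact q.d_triangle _ _ _
    _ = q.d x y + (q.d y (p : X × ℝ≥0).1 + (p : X × ℝ≥0).2) := add_assoc _ _ _
  have hsup_weight : ∀ (χ : X → ℝ≥0∞), q.IsWeight χ → ∀ (x : X) (r : ℝ≥0∞),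
      (⨆ y, χ y - (q.d y x + r)) = χ x - r := by
    intro χ hχ x r
    refine le_antisymm (iSup_le fun y => ?_) ?_
    · calc χ y - (q.d y x + r) ≤ (χ x + q.d y x) - (q.d y x + r) :=
        tsub_le_tsub_right (hχ y x) _
      _ = (χ x + q.d y x) - (r + q.d y x) := by rw [add_comm r]
      _ ≤ χ x - r := eadd_sub_add' _ _ _
    · have h := le_iSup (fun y => χ y - (q.d y x + r)) x
      rwa [q.d_self, zero_add] at h
  have hrho : ∀ (χ : X → ℝ≥0∞), q.IsWeight χ →
      rho ψ χ = ⨆ p : ↥S, ((χ (p : X × ℝ≥0).1 + (rinf : ℝ≥0∞)) - ((p : X × ℝ≥0).2 : ℝ≥0∞)) := by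
    intro χ hχ
    have hχ' : q.IsWeight (fun y => χ y + rinf) := fun x y => by
      simpa [add_right_comm] using add_le_add_right (hχ x y) (rinf : ℝ≥0∞)
    calc rho ψ χ = ⨆ y, ((χ y + rinf) - φ y) := by
          refine iSup_congr fun y => ?_
          show χ y - (φ y - rinf) = _
          exact esub_sub' _ _ _ (hrle y) ENNReal.coe_ne_top
      _ = ⨆ y, ⨆ p : ↥S, ((χ y + (rinf:ℝ≥0∞)) - (q.d y (p : X × ℝ≥0).1 + (p : X × ℝ≥0).2)) := by
          exact iSup_congr fun y => ENNReal.sub_iInf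
      _ = ⨆ p : ↥S, ⨆ y, ((χ y + (rinf:ℝ≥0∞)) - (q.d y (p : X × ℝ≥0).1 + (p : X × ℝ≥0).2)) :=
          iSup_comm
      _ = _ := iSup_congr fun p => hsup_weight _ hχ' _ _
  have hψw : q.IsWeight ψ := by
    intro x y
    refine le_trans (tsub_le_tsub_right
      (le_trans (hφw x y) (le_of_eq (add_comm _ _))) _) ?_
    exact le_of_eq (esub_add' _ _ _ (hrle y) ENNReal.coe_ne_top).symm
  have hψ0 : (⨅ x, ψ x) = 0 := by
    refine le_antisymm (ENNReal.le_of_forall_pos_le_add fun ε hε _ => ?_) zero_le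
    have h1 : (⨅ p : ↥S, (p : X × ℝ≥0).2) < rinf + ε := by
      rw [← hrinf]; exact lt_add_of_pos_right _ hε
    obtain ⟨p, hp⟩ := exists_lt_of_ciInf_lt h1
    calc (⨅ x, ψ x) ≤ ψ (p : X × ℝ≥0).1 := iInf_le _ _
    _ ≤ ((p : X × ℝ≥0).2 : ℝ≥0∞) - rinf := by
        refine tsub_le_tsub_right ?_ _
        have h := iInf_le
          (fun p' : ↥S => q.d (p : X × ℝ≥0).1 (p' : X × ℝ≥0).1 + ((p' : X × ℝ≥0).2 : ℝ≥0∞)) p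
        rwa [q.d_self, zero_add] at h
    _ ≤ 0 + ε := by
        rw [zero_add, tsub_le_iff_right]
        rw [add_comm]
        exact_mod_cast hp.le
  have hmono : ∀ (χ : X → ℝ≥0∞), q.IsWeight χ → ∀ p k : ↥S, q.ballLE (p : X × ℝ≥0) (k : X × ℝ≥0) →
      (χ (p : X × ℝ≥0).1 + (rinf : ℝ≥0∞)) - (p : X × ℝ≥0).2
        ≤ (χ (k : X × ℝ≥0).1 + (rinf : ℝ≥0∞)) - (k : X × ℝ≥0).2 := by
    intro χ hχ p k hpk
    calc (χ (p : X × ℝ≥0).1 + (rinf : ℝ≥0∞)) - (p : X × ℝ≥0).2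
        ≤ ((χ (k : X × ℝ≥0).1 + q.d (p : X × ℝ≥0).1 (k : X × ℝ≥0).1) + (rinf : ℝ≥0∞))
            - (((k : X × ℝ≥0).2 : ℝ≥0∞) + q.d (p : X × ℝ≥0).1 (k : X × ℝ≥0).1) := by
          refine tsub_le_tsub ?_ hpk
          gcongr
          exact hχ _ _
     _ = ((χ (k : X × ℝ≥0).1 + (rinf : ℝ≥0∞)) + q.d (p : X × ℝ≥0).1 (k : X × ℝ≥0).1)
            - (((k : X × ℝ≥0).2 : ℝ≥0∞) + q.d (p : X × ℝ≥0).1 (k : X × ℝ≥0).1) := by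
          rw [add_right_comm]
     _ ≤ _ := eadd_sub_add' _ _ _
  have hψflat : ∀ l m : X → ℝ≥0∞, q.IsWeight l → q.IsWeight m →
      rho ψ (fun x => min (l x) (m x)) = min (rho ψ l) (rho ψ m) := by
    intro l m hl hm
    have hminw : q.IsWeight (fun x => min (l x) (m x)) := by
      intro x y
      have h : min (l x) (m x) ≤ min (l y + q.d x y) (m y + q.d x y) :=
        le_min ((min_le_left _ _).trans (hl x y)) ((min_le_right _ _).trans (hm x y))
      rwa [← emin_add'] at h
    rw [hrho _ hminw, hrho _ hl, hrho _ hm]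
    have hAB : ∀ p : ↥S, ((min (l (p : X × ℝ≥0).1) (m (p : X × ℝ≥0).1)) + (rinf : ℝ≥0∞))
        - (p : X × ℝ≥0).2
        = min ((l (p : X × ℝ≥0).1 + (rinf : ℝ≥0∞)) - (p : X × ℝ≥0).2)
            ((m (p : X × ℝ≥0).1 + (rinf : ℝ≥0∞)) - (p : X × ℝ≥0).2) := by
      intro p; rw [emin_add', emin_sub']
    simp only [hAB]
    refine le_antisymm (le_min (iSup_mono fun p => min_le_left _ _)
      (iSup_mono fun p => min_le_right _ _)) ?_
    calc min (⨆ p : ↥S, ((l (p : X × ℝ≥0).1 + (rinf : ℝ≥0∞)) - (p : X × ℝ≥0).2))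
          (⨆ p : ↥S, ((m (p : X × ℝ≥0).1 + (rinf : ℝ≥0∞)) - (p : X × ℝ≥0).2))
        = ⨆ p : ↥S, ⨆ k : ↥S, (((l (p : X × ℝ≥0).1 + (rinf : ℝ≥0∞)) - (p : X × ℝ≥0).2)
            ⊓ ((m (k : X × ℝ≥0).1 + (rinf : ℝ≥0∞)) - (k : X × ℝ≥0).2)) := by
          rw [iSup_inf_eq]
          exact iSup_congr fun p => inf_iSup_eq _ _
      _ ≤ ⨆ j : ↥S, min ((l (j : X × ℝ≥0).1 + (rinf : ℝ≥0∞)) - (j : X × ℝ≥0).2)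
            ((m (j : X × ℝ≥0).1 + (rinf : ℝ≥0∞)) - (j : X × ℝ≥0).2) := by
          refine iSup_le fun p => iSup_le fun k => ?_
          obtain ⟨z, hz, h1, h2⟩ := hdir (p : X × ℝ≥0) p.2 (k : X × ℝ≥0) k.2
          refine le_trans (inf_le_inf (hmono l hl p ⟨z, hz⟩ h1) (hmono m hm k ⟨z, hz⟩ h2)) ?_
          exact le_iSup (fun j : ↥S => min ((l (j : X × ℝ≥0).1 + (rinf : ℝ≥0∞)) - (j : X × ℝ≥0).2)
            ((m (j : X × ℝ≥0).1 + (rinf : ℝ≥0∞)) - (j : X × ℝ≥0).2)) (⟨z, hz⟩ : ↥S)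
  have hψbdd : q.BoundedWeight ψ := by
    refine ⟨rinf, e.1, fun y => ?_⟩
    rw [hφψ y]
    refine le_iInf fun p => ?_
    calc q.d y e.1 ≤ q.d y (p : X × ℝ≥0).1 + q.d (p : X × ℝ≥0).1 e.1 := q.d_triangle _ _ _
    _ ≤ q.d y (p : X × ℝ≥0).1 + (p : X × ℝ≥0).2 := by
        gcongr
        exact le_trans le_add_self (hub (p : X × ℝ≥0) p.2)
  obtain ⟨b, hb⟩ := hcolim ψ ⟨hψw, hψ0, hψflat⟩ hψbdd
  have hdw : ∀ y : X, q.IsWeight (fun z => q.d z y) := by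
    intro y x z
    calc q.d x y ≤ q.d x z + q.d z y := q.d_triangle _ _ _
    _ = q.d z y + q.d x z := add_comm _ _
  have hb' : ∀ y, q.d b y = ⨆ p : ↥S, ((q.d (p : X × ℝ≥0).1 y + (rinf : ℝ≥0∞))
      - ((p : X × ℝ≥0).2 : ℝ≥0∞)) := by
    intro y
    rw [hb y]
    exact hrho _ (hdw y)
  refine ⟨b, fun p hp => ?_, fun c hc => ?_⟩
  · -- upper bound
    show ((rinf : ℝ≥0) : ℝ≥0∞) + q.d p.1 b ≤ (p.2 : ℝ≥0∞)
    have hsup0 : (⨆ k : ↥S, ((q.d (k : X × ℝ≥0).1 b + (rinf : ℝ≥0∞))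
        - ((k : X × ℝ≥0).2 : ℝ≥0∞))) = 0 := by
      rw [← hb' b, q.d_self]
    have h0 : (q.d p.1 b + (rinf : ℝ≥0∞)) - (p.2 : ℝ≥0∞) = 0 := by
      refine le_antisymm ?_ zero_le
      rw [← hsup0]
      exact le_iSup (fun k : ↥S => (q.d (k : X × ℝ≥0).1 b + (rinf : ℝ≥0∞))
        - ((k : X × ℝ≥0).2 : ℝ≥0∞)) (⟨p, hp⟩ : ↥S)
    have := tsub_eq_zero_iff_le.mp h0
    rwa [add_comm] at this
  · -- least
    show ((c.2 : ℝ≥0) : ℝ≥0∞) + q.d b c.1 ≤ ((rinf : ℝ≥0) : ℝ≥0∞)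
    have hc2 : ∀ p : ↥S, c.2 ≤ (p : X × ℝ≥0).2 := fun p => by
      have h := hc (p : X × ℝ≥0) p.2
      exact_mod_cast le_trans le_self_add h
    have hcr : c.2 ≤ rinf := le_ciInf hc2
    have hkey : q.d b c.1 ≤ (rinf : ℝ≥0∞) - (c.2 : ℝ≥0∞) := by
      rw [hb' c.1]
      refine iSup_le fun p => ?_
      have h1 : q.d (p : X × ℝ≥0).1 c.1 ≤ ((p : X × ℝ≥0).2 : ℝ≥0∞) - (c.2 : ℝ≥0∞) :=
        ENNReal.le_sub_of_add_le_left ENNReal.coe_ne_top (hc (p : X × ℝ≥0) p.2)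
      calc (q.d (p : X × ℝ≥0).1 c.1 + (rinf : ℝ≥0∞)) - ((p : X × ℝ≥0).2 : ℝ≥0∞)
          ≤ ((((p : X × ℝ≥0).2 : ℝ≥0∞) - (c.2 : ℝ≥0∞)) + (rinf : ℝ≥0∞))
              - ((p : X × ℝ≥0).2 : ℝ≥0∞) := by gcongr
        _ = ((((p : X × ℝ≥0).2 : ℝ≥0∞) + (rinf : ℝ≥0∞)) - (c.2 : ℝ≥0∞))
              - ((p : X × ℝ≥0).2 : ℝ≥0∞) := by
            rw [esub_add' _ _ _ (by exact_mod_cast hc2 p) ENNReal.coe_ne_top]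
        _ = (((p : X × ℝ≥0).2 : ℝ≥0∞) + (rinf : ℝ≥0∞))
              - ((c.2 : ℝ≥0∞) + ((p : X × ℝ≥0).2 : ℝ≥0∞)) := by
            rw [← tsub_add_eq_tsub_tsub]
        _ = ((rinf : ℝ≥0∞) + ((p : X × ℝ≥0).2 : ℝ≥0∞))
              - ((c.2 : ℝ≥0∞) + ((p : X × ℝ≥0).2 : ℝ≥0∞)) := by
            rw [add_comm (((p : X × ℝ≥0).2 : ℝ≥0∞)) _]
        _ ≤ (rinf : ℝ≥0∞) - (c.2 : ℝ≥0∞) := eadd_sub_add' _ _ _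
    calc ((c.2 : ℝ≥0) : ℝ≥0∞) + q.d b c.1 ≤ (c.2 : ℝ≥0∞) + ((rinf : ℝ≥0∞) - (c.2 : ℝ≥0∞)) := by
          gcongr
      _ = (rinf : ℝ≥0∞) := add_tsub_cancel_of_le (by exact_mod_cast hcr)



open QuasiMetric in
/-- every bounded ideal of `(X, d)` has a colimit iff `(X, d)` is local
Yoneda complete: (i) whenever `(x, r)` is a least upper bound of a directed set of formal
balls, `r` is the infimum of the radii, and (ii) `BX` is a local dcpo. -/
theorem stmt16 {X : Type u} (q : QuasiMetric X) :
    (∀ φ : X → ℝ≥0∞, q.IsIdeal φ → q.BoundedWeight φ → ∃ b, q.IsColimit φ b) ↔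
      ((∀ S : Set (X × ℝ≥0), S.Nonempty → DirectedOn q.ballLE S →
          ∀ (x : X) (r : ℝ≥0), q.IsBallLUB S (x, r) → r = ⨅ p : ↥S, (p : X × ℝ≥0).2) ∧
        q.BallLocalDcpo) := by
  constructor
  · intro hcolim
    constructor
    · intro S hne hdir x r hlub
      obtain ⟨b, hb⟩ := exists_ball_lub' q hcolim S hne hdir (x, r) hlub.1
      have h1 := hlub.2 _ hb.1
      have h2 := hb.2 _ hlub.1
      have hr1 : (⨅ p : ↥S, (p : X × ℝ≥0).2) ≤ r := by
        have h := le_trans le_self_add h1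
        exact_mod_cast h
      have hr2 : r ≤ ⨅ p : ↥S, (p : X × ℝ≥0).2 := by
        have h := le_trans le_self_add h2
        exact_mod_cast h
      exact le_antisymm hr2 hr1
    · rintro S hne hdir ⟨c, hc⟩
      obtain ⟨b, hb⟩ := exists_ball_lub' q hcolim S hne hdir c hc
      exact ⟨_, hb⟩
  · rintro ⟨hrad, hloc⟩ φ hid hbw
    obtain ⟨hw, hinf, hflat⟩ := hid
    obtain ⟨r₀, a, hbd⟩ := hbw
    set Sc : ℝ≥0 → Set (X × ℝ≥0) := fun c => {p | φ p.1 + (c : ℝ≥0∞) < (p.2 : ℝ≥0∞)} with hScdef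
    have hSne : ∀ c : ℝ≥0, (Sc c).Nonempty := by
      intro c
      have h1 : (⨅ x, φ x) < 1 := by rw [hinf]; exact zero_lt_one
      obtain ⟨z, hz⟩ := iInf_lt_iff.mp h1
      refine ⟨(z, 1 + c), ?_⟩
      show φ z + (c : ℝ≥0∞) < ((1 + c : ℝ≥0) : ℝ≥0∞)
      push_cast
      exact ENNReal.add_lt_add_right ENNReal.coe_ne_top hz
    have hwt : ∀ (w : X) (C : ℝ≥0∞), q.IsWeight (fun z => C - q.d w z) := by
      intro w C z z'
      have ht : q.d w z' - q.d z z' ≤ q.d w z := tsub_le_iff_right.mpr (q.d_triangle w z z')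
      calc C - q.d w z ≤ C - (q.d w z' - q.d z z') := tsub_le_tsub_left ht C
        _ ≤ (C - q.d w z') + q.d z z' := esub_sub_le' _ _ _
    have hSdir : ∀ c : ℝ≥0, DirectedOn q.ballLE (Sc c) := by
      intro c
      rintro ⟨x, r⟩ hxr ⟨y, s⟩ hys
      have hxr' : φ x + (c : ℝ≥0∞) < (r : ℝ≥0∞) := hxr
      have hys' : φ y + (c : ℝ≥0∞) < (s : ℝ≥0∞) := hys
      have hxR : φ x < (r : ℝ≥0∞) - c := lt_tsub_iff_right.mpr hxr'
      have hyS : φ y < (s : ℝ≥0∞) - c := lt_tsub_iff_right.mpr hys'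
      set γ := min (((r : ℝ≥0∞) - c) - φ x) (((s : ℝ≥0∞) - c) - φ y) with hγdef
      have hγ0 : γ ≠ 0 := (lt_min (tsub_pos_of_lt hxR) (tsub_pos_of_lt hyS)).ne'
      have hRtop : (r : ℝ≥0∞) - c ≠ ∞ := (tsub_le_self.trans_lt ENNReal.coe_lt_top).ne
      have hγtop : γ ≠ ∞ := ne_top_of_le_ne_top hRtop ((min_le_left _ _).trans tsub_le_self)
      set θ := γ / 2 with hθdef
      have hθ0 : θ ≠ 0 := (ENNReal.half_pos hγ0).ne'
      have hθγ : θ < γ := ENNReal.half_lt_self hγ0 hγtop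
      have hθtop : θ ≠ ∞ := ne_top_of_le_ne_top hγtop ENNReal.half_le_self
      have hlow : γ ≤ ⨆ z, (min (((r : ℝ≥0∞) - c) - q.d x z) (((s : ℝ≥0∞) - c) - q.d y z)
          - φ z) := by
        have hfl := hflat (fun z => ((r : ℝ≥0∞) - c) - q.d x z)
          (fun z => ((s : ℝ≥0∞) - c) - q.d y z) (hwt x _) (hwt y _)
        simp only [rho] at hfl
        rw [hfl]
        refine le_min (le_trans (min_le_left _ _) ?_) (le_trans (min_le_right _ _) ?_)
        · have h := le_iSup (fun z => (((r : ℝ≥0∞) - c) - q.d x z) - φ z) x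
          rwa [q.d_self, tsub_zero] at h
        · have h := le_iSup (fun z => (((s : ℝ≥0∞) - c) - q.d y z) - φ z) y
          rwa [q.d_self, tsub_zero] at h
      have hθsup : θ < ⨆ z, (min (((r : ℝ≥0∞) - c) - q.d x z) (((s : ℝ≥0∞) - c) - q.d y z)
          - φ z) := lt_of_lt_of_le hθγ hlow
      obtain ⟨z, hz⟩ := lt_iSup_iff.mp hθsup
      have h1 : θ + φ z < min (((r : ℝ≥0∞) - c) - q.d x z) (((s : ℝ≥0∞) - c) - q.d y z) :=
        lt_tsub_iff_right.mp hz
      have hx4 : ((θ + φ z) + q.d x z) + (c : ℝ≥0∞) < (r : ℝ≥0∞) :=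
        lt_tsub_iff_right.mp (lt_tsub_iff_right.mp (lt_of_lt_of_le h1 (min_le_left _ _)))
      have hy4 : ((θ + φ z) + q.d y z) + (c : ℝ≥0∞) < (s : ℝ≥0∞) :=
        lt_tsub_iff_right.mp (lt_tsub_iff_right.mp (lt_of_lt_of_le h1 (min_le_right _ _)))
      have hφz : φ z ≠ ∞ := by
        intro h
        rw [h] at hx4
        simp at hx4
      refine ⟨(z, (φ z).toNNReal + c + θ.toNNReal), ?_, ?_, ?_⟩
      · show φ z + (c : ℝ≥0∞) < (((φ z).toNNReal + c + θ.toNNReal : ℝ≥0) : ℝ≥0∞)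
        push_cast
        rw [ENNReal.coe_toNNReal hφz, ENNReal.coe_toNNReal hθtop]
        exact ENNReal.lt_add_right (ENNReal.add_ne_top.mpr ⟨hφz, ENNReal.coe_ne_top⟩) hθ0
      · show (((φ z).toNNReal + c + θ.toNNReal : ℝ≥0) : ℝ≥0∞) + q.d x z ≤ (r : ℝ≥0∞)
        refine le_trans (le_of_eq ?_) hx4.le
        push_cast
        rw [ENNReal.coe_toNNReal hφz, ENNReal.coe_toNNReal hθtop]
        ring
      · show (((φ z).toNNReal + c + θ.toNNReal : ℝ≥0) : ℝ≥0∞) + q.d y z ≤ (s : ℝ≥0∞)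
        refine le_trans (le_of_eq ?_) hy4.le
        push_cast
        rw [ENNReal.coe_toNNReal hφz, ENNReal.coe_toNNReal hθtop]
        ring
    have hSinf : ∀ c : ℝ≥0, (⨅ p : ↥(Sc c), (p : X × ℝ≥0).2) = c := by
      intro c
      haveI : Nonempty ↥(Sc c) := (hSne c).to_subtype
      refine le_antisymm (not_lt.mp fun hlt => ?_) (le_ciInf fun p => ?_)
      · set I := ⨅ p : ↥(Sc c), (p : X × ℝ≥0).2 with hI
        have hδ : (0 : ℝ≥0) < (I - c) / 2 :=
          half_pos (tsub_pos_of_lt hlt)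
        have hφlt : (⨅ x, φ x) < (((I - c) / 2 : ℝ≥0) : ℝ≥0∞) := by
          rw [hinf]; exact_mod_cast hδ
        obtain ⟨z, hz⟩ := iInf_lt_iff.mp hφlt
        have hmem : (z, c + (I - c) / 2) ∈ Sc c := by
          show φ z + (c : ℝ≥0∞) < ((c + (I - c) / 2 : ℝ≥0) : ℝ≥0∞)
          rw [ENNReal.coe_add]
          calc φ z + (c : ℝ≥0∞) < (((I - c) / 2 : ℝ≥0) : ℝ≥0∞) + c :=
            ENNReal.add_lt_add_right ENNReal.coe_ne_top hz
          _ = (c : ℝ≥0∞) + (((I - c) / 2 : ℝ≥0) : ℝ≥0∞) := add_comm _ _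
        have hle : (⨅ p : ↥(Sc c), (p : X × ℝ≥0).2) ≤ c + (I - c) / 2 :=
          ciInf_le (OrderBot.bddBelow _) (⟨_, hmem⟩ : ↥(Sc c))
        have hlt2 : c + (I - c) / 2 < I := by
          have h2 : (I - c) / 2 < I - c := NNReal.half_lt_self (tsub_pos_of_lt hlt).ne'
          calc c + (I - c) / 2 < c + (I - c) := add_lt_add_right h2 c
            _ = I := add_tsub_cancel_of_le hlt.le
        exact absurd hle (not_le.mpr hlt2)
      · have hp : φ (p : X × ℝ≥0).1 + (c : ℝ≥0∞) < ((p : X × ℝ≥0).2 : ℝ≥0∞) := p.2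
        exact_mod_cast (le_add_self.trans_lt hp).le
    have hlub : ∀ c : ℝ≥0, r₀ ≤ c → ∃ b, q.IsBallLUB (Sc c) (b, c) ∧ ∀ z, q.d z b ≤ φ z := by
      intro c hc
      have hub : ∀ p ∈ Sc c, q.ballLE p (a, 0) := by
        intro p hp
        show ((0 : ℝ≥0) : ℝ≥0∞) + q.d p.1 a ≤ (p.2 : ℝ≥0∞)
        rw [ENNReal.coe_zero, zero_add]
        have hp' : φ p.1 + (c : ℝ≥0∞) < (p.2 : ℝ≥0∞) := hp
        calc q.d p.1 a ≤ (r₀ : ℝ≥0∞) + φ p.1 := hbd p.1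
          _ ≤ (c : ℝ≥0∞) + φ p.1 := by gcongr
          _ = φ p.1 + (c : ℝ≥0∞) := add_comm _ _
          _ ≤ (p.2 : ℝ≥0∞) := hp'.le
      obtain ⟨⟨b, ρ⟩, hb⟩ := hloc (Sc c) (hSne c) (hSdir c) ⟨(a, 0), hub⟩
      have hρ : ρ = c := by
        have h := hrad (Sc c) (hSne c) (hSdir c) b ρ hb
        rw [h, hSinf c]
      subst hρ
      refine ⟨b, hb, fun z => ?_⟩
      by_cases hz : φ z = ∞
      · rw [hz]; exact le_top
      · refine ENNReal.le_of_forall_pos_le_add fun θ hθ _ => ?_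
        have hmem : (z, (φ z).toNNReal + ρ + θ) ∈ Sc ρ := by
          show φ z + (ρ : ℝ≥0∞) < (((φ z).toNNReal + ρ + θ : ℝ≥0) : ℝ≥0∞)
          push_cast
          rw [ENNReal.coe_toNNReal hz]
          exact ENNReal.lt_add_right (ENNReal.add_ne_top.mpr ⟨hz, ENNReal.coe_ne_top⟩)
            (by exact_mod_cast hθ.ne')
        have h2 := hb.1 _ hmem
        refine ecancel' (a := (ρ : ℝ≥0∞)) ENNReal.coe_ne_top ?_
        calc (ρ : ℝ≥0∞) + q.d z b ≤ (((φ z).toNNReal + ρ + θ : ℝ≥0) : ℝ≥0∞) := h2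
          _ = (ρ : ℝ≥0∞) + (φ z + θ) := by push_cast [ENNReal.coe_toNNReal hz]; ring
    obtain ⟨b, hblub, hbz⟩ := hlub r₀ le_rfl
    refine ⟨b, fun y => ?_⟩
    refine le_antisymm ?_ (iSup_le fun x => ?_)
    · by_cases hδtop : (⨆ x, q.d x y - φ x) = ∞
      · rw [hδtop]; exact le_top
      · set δ := ⨆ x, q.d x y - φ x with hδdef
        obtain ⟨b', hb'lub, hb'z⟩ := hlub (r₀ + δ.toNNReal) le_self_add
        have h1 : q.d b b' = 0 := by
          have hup : ∀ p ∈ Sc r₀, q.ballLE p (b', r₀) := by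
            intro p hp
            show (r₀ : ℝ≥0∞) + q.d p.1 b' ≤ (p.2 : ℝ≥0∞)
            have hp' : φ p.1 + (r₀ : ℝ≥0∞) < (p.2 : ℝ≥0∞) := hp
            calc (r₀ : ℝ≥0∞) + q.d p.1 b' ≤ (r₀ : ℝ≥0∞) + φ p.1 := by gcongr; exact hb'z _
              _ = φ p.1 + (r₀ : ℝ≥0∞) := add_comm _ _
              _ ≤ _ := hp'.le
          have h := hblub.2 _ hup
          have h' : (r₀ : ℝ≥0∞) + q.d b b' ≤ (r₀ : ℝ≥0∞) + 0 := by rw [add_zero]; exact h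
          exact le_antisymm (ecancel' ENNReal.coe_ne_top h') zero_le
        have h2 : q.d b' b = 0 := by
          have hup : ∀ p ∈ Sc (r₀ + δ.toNNReal), q.ballLE p (b, r₀ + δ.toNNReal) := by
            intro p hp
            show ((r₀ + δ.toNNReal : ℝ≥0) : ℝ≥0∞) + q.d p.1 b ≤ (p.2 : ℝ≥0∞)
            have hp' : φ p.1 + ((r₀ + δ.toNNReal : ℝ≥0) : ℝ≥0∞) < (p.2 : ℝ≥0∞) := hp
            calc ((r₀ + δ.toNNReal : ℝ≥0) : ℝ≥0∞) + q.d p.1 b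
                ≤ ((r₀ + δ.toNNReal : ℝ≥0) : ℝ≥0∞) + φ p.1 := by gcongr; exact hbz _
              _ = φ p.1 + ((r₀ + δ.toNNReal : ℝ≥0) : ℝ≥0∞) := add_comm _ _
              _ ≤ _ := hp'.le
          have h := hb'lub.2 _ hup
          have h' : ((r₀ + δ.toNNReal : ℝ≥0) : ℝ≥0∞) + q.d b' b
              ≤ ((r₀ + δ.toNNReal : ℝ≥0) : ℝ≥0∞) + 0 := by rw [add_zero]; exact h
          exact le_antisymm (ecancel' ENNReal.coe_ne_top h') zero_le
        have hbb' : b = b' := q.d_separated b b' h1 h2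
        subst hbb'
        have hup : ∀ p ∈ Sc (r₀ + δ.toNNReal), q.ballLE p (y, r₀) := by
          intro p hp
          show (r₀ : ℝ≥0∞) + q.d p.1 y ≤ (p.2 : ℝ≥0∞)
          have hp' : φ p.1 + ((r₀ + δ.toNNReal : ℝ≥0) : ℝ≥0∞) < (p.2 : ℝ≥0∞) := hp
          have h3 : q.d p.1 y - φ p.1 ≤ δ := le_iSup (fun x => q.d x y - φ x) p.1
          have h4 : q.d p.1 y ≤ δ + φ p.1 := tsub_le_iff_right.mp h3
          calc (r₀ : ℝ≥0∞) + q.d p.1 y ≤ (r₀ : ℝ≥0∞) + (δ + φ p.1) := by gcongr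
            _ = φ p.1 + ((r₀ + δ.toNNReal : ℝ≥0) : ℝ≥0∞) := by
                push_cast
                rw [ENNReal.coe_toNNReal hδtop]
                ring
            _ ≤ _ := hp'.le
        have h5 := hb'lub.2 _ hup
        have h6 : (r₀ : ℝ≥0∞) + q.d b y ≤ (r₀ : ℝ≥0∞) + δ := by
          refine h5.trans (le_of_eq ?_)
          push_cast
          rw [ENNReal.coe_toNNReal hδtop]
        exact ecancel' ENNReal.coe_ne_top h6
    · rw [tsub_le_iff_right]
      calc q.d x y ≤ q.d x b + q.d b y := q.d_triangle _ _ _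
        _ ≤ φ x + q.d b y := by gcongr; exact hbz x
        _ = q.d b y + φ x := add_comm _ _
end

section
/- Let (X,d) be a continuous 𝕁-algebra and define the 𝓙-below distributor 𝔴 : X × X → [0,∞] by 𝔴(x,y) = sup over all bounded ideals φ of (X,d) of (φ(x) ⊖ d(y, colim φ)). Then for all x,y ∈ X and all r,s ∈ [0,∞), (x,r) is way below (y,s) in BX if and only if r > s + 𝔴(x,y). -/
open scoped ENNReal NNReal

universe u v w

namespace QuasiMetric

variable {X : Type u} {q : QuasiMetric X}

theorem rho_eq' (φ ψ : X → ℝ≥0∞) : rho φ ψ = ⨆ u, ψ u - φ u := rfl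

theorem rho_refl' (φ : X → ℝ≥0∞) : rho φ φ = 0 := by simp [rho]

theorem le_rho' (φ ψ : X → ℝ≥0∞) (u : X) : ψ u - φ u ≤ rho φ ψ := by
  rw [rho_eq']; exact le_iSup (fun v => ψ v - φ v) u

theorem ballLE_trans' {p p' p'' : X × ℝ≥0} (h : q.ballLE p p') (h' : q.ballLE p' p'') :
    q.ballLE p p'' := by
  unfold ballLE at *
  calc (p''.2 : ℝ≥0∞) + q.d p.1 p''.1
      ≤ (p''.2 : ℝ≥0∞) + (q.d p.1 p'.1 + q.d p'.1 p''.1) :=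
        add_le_add_right (q.d_triangle _ _ _) _
    _ = ((p''.2 : ℝ≥0∞) + q.d p'.1 p''.1) + q.d p.1 p'.1 := by ring
    _ ≤ (p'.2 : ℝ≥0∞) + q.d p.1 p'.1 := add_le_add_left h' _
    _ ≤ p.2 := h

theorem colim_d_le' {φ : X → ℝ≥0∞} {b : X} (h : q.IsColimit φ b) (u : X) :
    q.d u b ≤ φ u := by
  have h0 := h b
  rw [q.d_self] at h0
  have h1 : q.d u b - φ u ≤ 0 := by
    rw [h0]; exact le_iSup (fun v => q.d v b - φ v) u
  exact tsub_eq_zero_iff_le.mp (le_antisymm h1 (zero_le))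

theorem iSup_min_directed' {ι : Sort v} [Nonempty ι] {R : ι → ι → Prop}
    (hdir : ∀ i j, ∃ k, R i k ∧ R j k) {f g : ι → ℝ≥0∞}
    (hf : ∀ i j, R i j → f i ≤ f j) (hg : ∀ i j, R i j → g i ≤ g j) :
    (⨆ i, min (f i) (g i)) = min (⨆ i, f i) (⨆ i, g i) := by
  refine le_antisymm (iSup_le fun i => le_min ((min_le_left _ _).trans (le_iSup f i))
    ((min_le_right _ _).trans (le_iSup g i))) ?_
  refine le_of_forall_lt fun c hc => ?_
  rw [lt_min_iff] at hc
  obtain ⟨i, hi⟩ := lt_iSup_iff.mp hc.1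
  obtain ⟨j, hj⟩ := lt_iSup_iff.mp hc.2
  obtain ⟨k, hik, hjk⟩ := hdir i j
  exact lt_iSup_iff.mpr ⟨k, lt_min (hi.trans_le (hf _ _ hik)) (hj.trans_le (hg _ _ hjk))⟩

end QuasiMetric

open QuasiMetric in
/-- in a continuous `𝕁`-algebra, with the `𝓙`-below distributor
`𝔴(x, y) = sup_{φ bounded ideal} (φ x ⊖ d (y, colim φ))`, one has
`(x, r) ≪ (y, s)` in `BX` iff `r > s + 𝔴(x, y)`. -/
theorem stmt19 {X : Type u} (q : QuasiMetric X)
    (colim : (X → ℝ≥0∞) → X)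
    (hcolim : ∀ φ, q.IsIdeal φ → q.BoundedWeight φ → q.IsColimit φ (colim φ))
    (w : X → X → ℝ≥0∞)
    (hwIdeal : ∀ x, q.IsIdeal (w x) ∧ q.BoundedWeight (w x))
    (hwRho : ∀ (x : X) (φ : X → ℝ≥0∞), q.IsIdeal φ → q.BoundedWeight φ →
      rho (w x) φ = q.d x (colim φ)) :
    ∀ (x y : X) (r s : ℝ≥0),
      q.ballWayBelow (x, r) (y, s) ↔
        (s : ℝ≥0∞) + (⨆ φ : {φ : X → ℝ≥0∞ // q.IsIdeal φ ∧ q.BoundedWeight φ},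
            (φ.1 x - q.d y (colim φ.1))) < (r : ℝ≥0∞) := by
  intro x y r s
  have hyI : q.IsIdeal (w y) := (hwIdeal y).1
  have hyB : q.BoundedWeight (w y) := (hwIdeal y).2
  have hdyc : q.d y (colim (w y)) = 0 := by
    rw [← hwRho y (w y) hyI hyB, rho_refl']
  have hsup : (⨆ φ : {φ : X → ℝ≥0∞ // q.IsIdeal φ ∧ q.BoundedWeight φ},
      (φ.1 x - q.d y (colim φ.1))) = w y x := by
    apply le_antisymm
    · refine iSup_le fun φ => ?_
      rw [← hwRho y φ.1 φ.2.1 φ.2.2, tsub_le_iff_right, add_comm]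
      exact tsub_le_iff_right.mp (le_rho' (w y) φ.1 x)
    · refine le_trans ?_ (le_iSup
        (fun φ : {φ : X → ℝ≥0∞ // q.IsIdeal φ ∧ q.BoundedWeight φ} =>
          φ.1 x - q.d y (colim φ.1)) ⟨w y, hyI, hyB⟩)
      simp [hdyc]
  constructor
  · -- way below implies the inequality
    intro hwb
    rw [hsup]
    have hb : q.IsColimit (w y) (colim (w y)) := hcolim _ hyI hyB
    have hinf0 : (⨅ u, w y u) = 0 := hyI.2.1
    have hex : ∀ ε : ℝ≥0∞, 0 < ε → ∃ u, w y u < ε := by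
      intro ε hε
      exact iInf_lt_iff.mp (by rw [hinf0]; exact hε)
    set S : Set (X × ℝ≥0) := {p | (s : ℝ≥0∞) + w y p.1 < (p.2 : ℝ≥0∞)} with hSdef
    have hmemS : ∀ p : X × ℝ≥0, p ∈ S ↔ (s : ℝ≥0∞) + w y p.1 < (p.2 : ℝ≥0∞) :=
      fun p => Iff.rfl
    obtain ⟨u₀, hu₀⟩ := hex 1 zero_lt_one
    have hSne : S.Nonempty := by
      refine ⟨(u₀, s + 1), (hmemS _).mpr ?_⟩
      push_cast
      exact ENNReal.add_lt_add_left ENNReal.coe_ne_top hu₀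
    have hψw : ∀ (z : X) (C : ℝ≥0∞), q.IsWeight (fun u => C - q.d z u) := by
      intro z C u v
      rw [tsub_le_iff_right]
      calc C ≤ (C - q.d z v) + q.d z v := le_tsub_add
        _ ≤ (C - q.d z v) + (q.d z u + q.d u v) := add_le_add_right (q.d_triangle z u v) _
        _ = ((C - q.d z v) + q.d u v) + q.d z u := by ring
    have hSdir : DirectedOn q.ballLE S := by
      rintro ⟨p1, ρ1⟩ hp1 ⟨p2, ρ2⟩ hp2
      replace hp1 := (hmemS _).mp hp1
      replace hp2 := (hmemS _).mp hp2
      have hs1 : (s : ℝ≥0∞) ≤ (ρ1 : ℝ≥0∞) := le_trans le_self_add hp1.le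
      have hs2 : (s : ℝ≥0∞) ≤ (ρ2 : ℝ≥0∞) := le_trans le_self_add hp2.le
      have hw1 : w y p1 < (ρ1 : ℝ≥0∞) - s := lt_tsub_iff_left.mpr hp1
      have hw2 : w y p2 < (ρ2 : ℝ≥0∞) - s := lt_tsub_iff_left.mpr hp2
      have heq := hyI.2.2 (fun u => ((ρ1 : ℝ≥0∞) - s) - q.d p1 u)
        (fun u => ((ρ2 : ℝ≥0∞) - s) - q.d p2 u) (hψw p1 _) (hψw p2 _)
      have hr1 : 0 < rho (w y) (fun u => ((ρ1 : ℝ≥0∞) - s) - q.d p1 u) := by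
        refine lt_of_lt_of_le ?_ (le_rho' _ _ p1)
        simpa [q.d_self] using tsub_pos_iff_lt.mpr hw1
      have hr2 : 0 < rho (w y) (fun u => ((ρ2 : ℝ≥0∞) - s) - q.d p2 u) := by
        refine lt_of_lt_of_le ?_ (le_rho' _ _ p2)
        simpa [q.d_self] using tsub_pos_iff_lt.mpr hw2
      have hrmin : 0 < rho (w y)
          (fun u => min (((ρ1 : ℝ≥0∞) - s) - q.d p1 u) (((ρ2 : ℝ≥0∞) - s) - q.d p2 u)) := by
        rw [heq]; exact lt_min hr1 hr2
      rw [rho_eq'] at hrmin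
      obtain ⟨u, hu⟩ := lt_iSup_iff.mp hrmin
      have hu' : w y u < min (((ρ1 : ℝ≥0∞) - s) - q.d p1 u) (((ρ2 : ℝ≥0∞) - s) - q.d p2 u) :=
        tsub_pos_iff_lt.mp hu
      have hd1 : w y u + q.d p1 u < (ρ1 : ℝ≥0∞) - s :=
        lt_tsub_iff_right.mp (lt_of_lt_of_le hu' (min_le_left _ _))
      have hd2 : w y u + q.d p2 u < (ρ2 : ℝ≥0∞) - s :=
        lt_tsub_iff_right.mp (lt_of_lt_of_le hu' (min_le_right _ _))
      have hq1 : ((s : ℝ≥0∞) + w y u) + q.d p1 u < (ρ1 : ℝ≥0∞) := by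
        have h2 := ENNReal.add_lt_add_left (a := (s : ℝ≥0∞)) ENNReal.coe_ne_top hd1
        rwa [← add_assoc, add_tsub_cancel_of_le hs1] at h2
      have hq2 : ((s : ℝ≥0∞) + w y u) + q.d p2 u < (ρ2 : ℝ≥0∞) := by
        have h2 := ENNReal.add_lt_add_left (a := (s : ℝ≥0∞)) ENNReal.coe_ne_top hd2
        rwa [← add_assoc, add_tsub_cancel_of_le hs2] at h2
      have hd1' : q.d p1 u ≤ (ρ1 : ℝ≥0∞) := le_trans le_add_self hq1.le
      have hd2' : q.d p2 u ≤ (ρ2 : ℝ≥0∞) := le_trans le_add_self hq2.le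
      set σ' : ℝ≥0∞ := min ((ρ1 : ℝ≥0∞) - q.d p1 u) ((ρ2 : ℝ≥0∞) - q.d p2 u) with hσ'def
      have hσ'top : σ' ≠ ∞ :=
        ne_top_of_le_ne_top ENNReal.coe_ne_top ((min_le_left _ _).trans tsub_le_self)
      refine ⟨(u, σ'.toNNReal), (hmemS _).mpr ?_, ?_, ?_⟩
      · show (s : ℝ≥0∞) + w y u < (σ'.toNNReal : ℝ≥0∞)
        rw [ENNReal.coe_toNNReal hσ'top]
        exact lt_min (lt_tsub_iff_right.mpr hq1) (lt_tsub_iff_right.mpr hq2)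
      · show (σ'.toNNReal : ℝ≥0∞) + q.d p1 u ≤ (ρ1 : ℝ≥0∞)
        rw [ENNReal.coe_toNNReal hσ'top]
        calc σ' + q.d p1 u ≤ ((ρ1 : ℝ≥0∞) - q.d p1 u) + q.d p1 u :=
              add_le_add_left (min_le_left _ _) _
          _ = (ρ1 : ℝ≥0∞) := tsub_add_cancel_of_le hd1'
      · show (σ'.toNNReal : ℝ≥0∞) + q.d p2 u ≤ (ρ2 : ℝ≥0∞)
        rw [ENNReal.coe_toNNReal hσ'top]
        calc σ' + q.d p2 u ≤ ((ρ2 : ℝ≥0∞) - q.d p2 u) + q.d p2 u :=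
              add_le_add_left (min_le_right _ _) _
          _ = (ρ2 : ℝ≥0∞) := tsub_add_cancel_of_le hd2'
    have hupper : ∀ p ∈ S, q.ballLE p (colim (w y), s) := by
      intro p hp
      show (s : ℝ≥0∞) + q.d p.1 (colim (w y)) ≤ (p.2 : ℝ≥0∞)
      exact le_trans (add_le_add_right (colim_d_le' hb p.1) _) ((hmemS p).mp hp).le
    have hβle : ∀ c : X × ℝ≥0, (∀ p ∈ S, q.ballLE p c) → (c.2 : ℝ≥0∞) ≤ (s : ℝ≥0∞) := by
      intro c hc
      refine ENNReal.le_of_forall_pos_le_add fun ε hε _ => ?_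
      obtain ⟨u, hu⟩ := hex (ε : ℝ≥0∞) (by exact_mod_cast hε)
      have hmem : (u, s + ε) ∈ S := by
        refine (hmemS _).mpr ?_
        push_cast
        exact ENNReal.add_lt_add_left ENNReal.coe_ne_top hu
      have h2 := hc _ hmem
      calc (c.2 : ℝ≥0∞) ≤ (c.2 : ℝ≥0∞) + q.d u c.1 := le_self_add
        _ ≤ ((s + ε : ℝ≥0) : ℝ≥0∞) := h2
        _ = (s : ℝ≥0∞) + (ε : ℝ≥0∞) := by push_cast; ring
    have hleast : ∀ c : X × ℝ≥0, (∀ p ∈ S, q.ballLE p c) → q.ballLE (colim (w y), s) c := by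
      intro c hc
      show (c.2 : ℝ≥0∞) + q.d (colim (w y)) c.1 ≤ (s : ℝ≥0∞)
      have hβ := hβle c hc
      rw [hb c.1]
      haveI : Nonempty X := ⟨y⟩
      rw [ENNReal.add_iSup]
      refine iSup_le fun u => ?_
      by_cases hfin : w y u = ∞
      · rw [hfin, ENNReal.sub_top, add_zero]
        exact hβ
      · refine ENNReal.le_of_forall_pos_le_add fun ε hε _ => ?_
        have hmem : (u, s + (w y u).toNNReal + ε) ∈ S := by
          refine (hmemS _).mpr ?_
          push_cast
          rw [ENNReal.coe_toNNReal hfin]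
          exact ENNReal.lt_add_right
            (ENNReal.add_ne_top.mpr ⟨ENNReal.coe_ne_top, hfin⟩)
            (by exact_mod_cast hε.ne')
        have h2 := hc _ hmem
        rcases le_total (q.d u c.1) (w y u) with hcase | hcase
        · rw [tsub_eq_zero_of_le hcase, add_zero]
          exact hβ.trans le_self_add
        · have h3 : ((c.2 : ℝ≥0∞) + (q.d u c.1 - w y u)) + w y u
              ≤ ((s : ℝ≥0∞) + (ε : ℝ≥0∞)) + w y u := by
            rw [add_assoc, tsub_add_cancel_of_le hcase]
            calc (c.2 : ℝ≥0∞) + q.d u c.1 ≤ ((s + (w y u).toNNReal + ε : ℝ≥0) : ℝ≥0∞) := h2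
              _ = ((s : ℝ≥0∞) + (ε : ℝ≥0∞)) + w y u := by
                  push_cast
                  rw [ENNReal.coe_toNNReal hfin]
                  ring
          exact (ENNReal.add_le_add_iff_right hfin).mp h3
    have hyb : q.ballLE (y, s) (colim (w y), s) := by
      show (s : ℝ≥0∞) + q.d y (colim (w y)) ≤ (s : ℝ≥0∞)
      rw [hdyc, add_zero]
    obtain ⟨p, hpS, hple⟩ := hwb S hSne hSdir (colim (w y), s) ⟨hupper, hleast⟩ hyb
    have hple' : (p.2 : ℝ≥0∞) + q.d x p.1 ≤ (r : ℝ≥0∞) := hple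
    have hdx : q.d x p.1 ≠ ∞ :=
      ne_top_of_le_ne_top ENNReal.coe_ne_top (le_trans le_add_self hple')
    calc (s : ℝ≥0∞) + w y x ≤ (s : ℝ≥0∞) + (w y p.1 + q.d x p.1) :=
          add_le_add_right (hyI.1 x p.1) _
      _ = ((s : ℝ≥0∞) + w y p.1) + q.d x p.1 := by ring
      _ < (p.2 : ℝ≥0∞) + q.d x p.1 := ENNReal.add_lt_add_right hdx ((hmemS p).mp hpS)
      _ ≤ (r : ℝ≥0∞) := hple'
  · -- the inequality implies way below
    intro hlt S hSne hSdir L hL hyL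
    rw [hsup] at hlt
    obtain ⟨p₀, hp₀⟩ := hSne
    haveI : Nonempty ↥S := ⟨⟨p₀, hp₀⟩⟩
    set t' : ℝ≥0∞ := ⨅ p : ↥S, (p.1.2 : ℝ≥0∞) with ht'def
    have ht'le : ∀ p : ↥S, t' ≤ (p.1.2 : ℝ≥0∞) := fun p => iInf_le _ p
    have ht'top : t' ≠ ∞ := ne_top_of_le_ne_top ENNReal.coe_ne_top (ht'le ⟨p₀, hp₀⟩)
    set φ : X → ℝ≥0∞ := fun u => ⨅ p : ↥S, (q.d u p.1.1 + ((p.1.2 : ℝ≥0∞) - t')) with hφdef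
    have hφeq : ∀ u, φ u = ⨅ p : ↥S, (q.d u p.1.1 + ((p.1.2 : ℝ≥0∞) - t')) := fun u => rfl
    have hφle : ∀ (u : X) (p : ↥S), φ u ≤ q.d u p.1.1 + ((p.1.2 : ℝ≥0∞) - t') := by
      intro u p; rw [hφeq]; exact iInf_le _ p
    have hφp : ∀ p : ↥S, φ p.1.1 ≤ (p.1.2 : ℝ≥0∞) - t' := by
      intro p; simpa [q.d_self] using hφle p.1.1 p
    have hw : q.IsWeight φ := by
      intro u v
      rw [← tsub_le_iff_right, hφeq v]
      refine le_iInf fun p => ?_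
      rw [tsub_le_iff_right]
      calc φ u ≤ q.d u p.1.1 + ((p.1.2 : ℝ≥0∞) - t') := hφle u p
        _ ≤ (q.d u v + q.d v p.1.1) + ((p.1.2 : ℝ≥0∞) - t') :=
            add_le_add_left (q.d_triangle u v p.1.1) _
        _ = (q.d v p.1.1 + ((p.1.2 : ℝ≥0∞) - t')) + q.d u v := by ring
    have hinfφ : (⨅ u, φ u) = 0 := by
      refine le_antisymm ?_ (zero_le)
      by_contra hpos
      push_neg at hpos
      have hc : ∀ p : ↥S, (⨅ u, φ u) + t' ≤ (p.1.2 : ℝ≥0∞) := by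
        intro p
        calc (⨅ u, φ u) + t' ≤ ((p.1.2 : ℝ≥0∞) - t') + t' :=
              add_le_add_left ((iInf_le _ p.1.1).trans (hφp p)) _
          _ = (p.1.2 : ℝ≥0∞) := tsub_add_cancel_of_le (ht'le p)
      have h2 : (⨅ u, φ u) + t' ≤ 0 + t' := by
        rw [zero_add, ht'def]; exact le_iInf hc
      exact absurd ((ENNReal.add_le_add_iff_right ht'top).mp h2) (not_le.mpr hpos)
    have hrho : ∀ ψ : X → ℝ≥0∞, q.IsWeight ψ →
        rho φ ψ = ⨆ p : ↥S, (ψ p.1.1 - ((p.1.2 : ℝ≥0∞) - t')) := by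
      intro ψ hψ
      apply le_antisymm
      · rw [rho_eq']
        refine iSup_le fun u => ?_
        have h1 : ψ u - φ u = ⨆ p : ↥S, (ψ u - (q.d u p.1.1 + ((p.1.2 : ℝ≥0∞) - t'))) := by
          rw [hφeq u]; exact ENNReal.sub_iInf
        rw [h1]
        refine iSup_le fun p => ?_
        refine le_trans ?_ (le_iSup (fun p : ↥S => ψ p.1.1 - ((p.1.2 : ℝ≥0∞) - t')) p)
        rw [tsub_add_eq_tsub_tsub]
        exact tsub_le_tsub_right (tsub_le_iff_right.mpr (hψ u p.1.1)) _
      · refine iSup_le fun p => ?_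
        exact le_trans (tsub_le_tsub_left (hφp p) _) (le_rho' _ _ p.1.1)
    have hmono : ∀ ψ : X → ℝ≥0∞, q.IsWeight ψ → ∀ p p' : ↥S, q.ballLE p.1 p'.1 →
        ψ p.1.1 - ((p.1.2 : ℝ≥0∞) - t') ≤ ψ p'.1.1 - ((p'.1.2 : ℝ≥0∞) - t') := by
      intro ψ hψ p p' hpp'
      have h3 : ((p'.1.2 : ℝ≥0∞) - t') + q.d p.1.1 p'.1.1 ≤ (p.1.2 : ℝ≥0∞) - t' := by
        refine (ENNReal.cancel_of_ne ht'top).le_tsub_of_add_le_right ?_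
        rw [add_right_comm, tsub_add_cancel_of_le (ht'le p')]
        exact hpp'
      calc ψ p.1.1 - ((p.1.2 : ℝ≥0∞) - t')
          ≤ ψ p.1.1 - (((p'.1.2 : ℝ≥0∞) - t') + q.d p.1.1 p'.1.1) := tsub_le_tsub_left h3 _
        _ = (ψ p.1.1 - q.d p.1.1 p'.1.1) - ((p'.1.2 : ℝ≥0∞) - t') := by
            rw [add_comm, tsub_add_eq_tsub_tsub]
        _ ≤ ψ p'.1.1 - ((p'.1.2 : ℝ≥0∞) - t') :=
            tsub_le_tsub_right (tsub_le_iff_right.mpr (hψ p.1.1 p'.1.1)) _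
    have hIdeal : q.IsIdeal φ := by
      refine ⟨hw, hinfφ, ?_⟩
      intro l m hl hm
      have hlm : q.IsWeight (fun u => min (l u) (m u)) := by
        intro u v
        refine le_trans (le_min ((min_le_left _ _).trans (hl u v))
          ((min_le_right _ _).trans (hm u v))) ?_
        exact le_of_eq (min_add_add_right _ _ _)
      rw [hrho _ hl, hrho _ hm, hrho _ hlm]
      have hminx : ∀ p : ↥S, min (l p.1.1) (m p.1.1) - ((p.1.2 : ℝ≥0∞) - t')
          = min (l p.1.1 - ((p.1.2 : ℝ≥0∞) - t')) (m p.1.1 - ((p.1.2 : ℝ≥0∞) - t')) := by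
        intro p
        rcases le_total (l p.1.1) (m p.1.1) with h | h
        · rw [min_eq_left h, min_eq_left (tsub_le_tsub_right h _)]
        · rw [min_eq_right h, min_eq_right (tsub_le_tsub_right h _)]
      rw [iSup_congr hminx]
      refine iSup_min_directed' (R := fun p p' : ↥S => q.ballLE p.1 p'.1) ?_
        (hmono l hl) (hmono m hm)
      intro p p'
      obtain ⟨k, hk, h1, h2⟩ := hSdir p.1 p.2 p'.1 p'.2
      exact ⟨⟨k, hk⟩, h1, h2⟩
    have hβle : (L.2 : ℝ≥0∞) ≤ t' := le_iInf fun p => le_trans le_self_add (hL.1 p.1 p.2)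
    have hbdd : q.BoundedWeight φ := by
      refine ⟨t'.toNNReal - L.2, L.1, fun u => ?_⟩
      have hcoe : ((t'.toNNReal - L.2 : ℝ≥0) : ℝ≥0∞) = t' - (L.2 : ℝ≥0∞) := by
        rw [ENNReal.coe_sub, ENNReal.coe_toNNReal ht'top]
      rw [hcoe, ← tsub_le_iff_left, hφeq u]
      refine le_iInf fun p => ?_
      rw [tsub_le_iff_left]
      have hdp : q.d p.1.1 L.1 ≤ (p.1.2 : ℝ≥0∞) - (L.2 : ℝ≥0∞) :=
        (ENNReal.cancel_of_ne ENNReal.coe_ne_top).le_tsub_of_add_le_left (hL.1 p.1 p.2)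
      have key : (p.1.2 : ℝ≥0∞) - (L.2 : ℝ≥0∞)
          ≤ (t' - (L.2 : ℝ≥0∞)) + ((p.1.2 : ℝ≥0∞) - t') := by
        rw [tsub_le_iff_right]
        refine le_of_eq ?_
        calc (p.1.2 : ℝ≥0∞) = ((p.1.2 : ℝ≥0∞) - t') + t' :=
              (tsub_add_cancel_of_le (ht'le p)).symm
          _ = ((p.1.2 : ℝ≥0∞) - t') + ((t' - (L.2 : ℝ≥0∞)) + (L.2 : ℝ≥0∞)) := by
              rw [tsub_add_cancel_of_le hβle]
          _ = ((t' - (L.2 : ℝ≥0∞)) + ((p.1.2 : ℝ≥0∞) - t')) + (L.2 : ℝ≥0∞) := by ring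
      calc q.d u L.1 ≤ q.d u p.1.1 + q.d p.1.1 L.1 := q.d_triangle _ _ _
        _ ≤ q.d u p.1.1 + ((p.1.2 : ℝ≥0∞) - (L.2 : ℝ≥0∞)) := add_le_add_right hdp _
        _ ≤ q.d u p.1.1 + ((t' - (L.2 : ℝ≥0∞)) + ((p.1.2 : ℝ≥0∞) - t')) :=
            add_le_add_right key _
        _ = (t' - (L.2 : ℝ≥0∞)) + (q.d u p.1.1 + ((p.1.2 : ℝ≥0∞) - t')) := by ring
    have hbb : q.IsColimit φ (colim φ) := hcolim φ hIdeal hbdd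
    have hupper : ∀ p ∈ S, q.ballLE p (colim φ, t'.toNNReal) := by
      intro p hp
      show (t'.toNNReal : ℝ≥0∞) + q.d p.1 (colim φ) ≤ (p.2 : ℝ≥0∞)
      rw [ENNReal.coe_toNNReal ht'top]
      calc t' + q.d p.1 (colim φ) ≤ t' + ((p.2 : ℝ≥0∞) - t') :=
            add_le_add_right ((colim_d_le' hbb p.1).trans (hφp ⟨p, hp⟩)) _
        _ = (p.2 : ℝ≥0∞) := add_tsub_cancel_of_le (ht'le ⟨p, hp⟩)
    have hLb : q.ballLE L (colim φ, t'.toNNReal) := hL.2 _ hupper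
    have hyb : q.ballLE (y, s) (colim φ, t'.toNNReal) := ballLE_trans' hyL hLb
    have hyb' : t' + q.d y (colim φ) ≤ (s : ℝ≥0∞) := by
      rw [← ENNReal.coe_toNNReal ht'top]
      exact hyb
    have hφx : φ x ≤ w y x + q.d y (colim φ) := by
      have h1 : φ x - w y x ≤ rho (w y) φ := le_rho' (w y) φ x
      rw [hwRho y φ hIdeal hbdd] at h1
      exact tsub_le_iff_left.mp h1
    have hfin : φ x + t' < (r : ℝ≥0∞) := by
      calc φ x + t' ≤ (w y x + q.d y (colim φ)) + t' := add_le_add_left hφx _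
        _ = w y x + (t' + q.d y (colim φ)) := by ring
        _ ≤ w y x + (s : ℝ≥0∞) := add_le_add_right hyb' _
        _ = (s : ℝ≥0∞) + w y x := add_comm _ _
        _ < (r : ℝ≥0∞) := hlt
    rw [hφeq x, ENNReal.iInf_add] at hfin
    obtain ⟨p, hp⟩ := iInf_lt_iff.mp hfin
    refine ⟨p.1, p.2, ?_⟩
    show (p.1.2 : ℝ≥0∞) + q.d x p.1.1 ≤ (r : ℝ≥0∞)
    rw [add_assoc, tsub_add_cancel_of_le (ht'le p)] at hp
    rw [add_comm]
    exact hp.le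
end
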